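/- Let α be regainingly approximable via a computable nondecreasing rational sequence (a_n) converging to α with A = {n : α − a_n < 2^{−n}} infinite. Then the following are equivalent: (a) α is computable; (b) A is decidable; (c) A is not hyperimmune. -/

import Mathlib

open Filter

noncomputable section

/-- A real is *regainingly approximable* if some computable nondecreasing rational
sequence converging to it is within `2⁻ⁿ` of it for infinitely many `n`. -/
def RegainApprox (α : ℝ) : Prop :=
  ∃ a : ℕ → ℚ, Computable a ∧ Monotone a ∧
    Tendsto (fun n => (a n : ℝ)) atTop (nhds α) ∧
    ∃ᶠ n in atTop, α - (a n : ℝ) < (2 : ℝ)⁻¹ ^ n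

def LeftComputable (α : ℝ) : Prop :=
  ∃ a : ℕ → ℚ, Computable a ∧ Monotone a ∧
    Tendsto (fun n => (a n : ℝ)) atTop (nhds α)

def ComputableReal (α : ℝ) : Prop :=
  ∃ a : ℕ → ℚ, Computable a ∧ ∀ n, |α - (a n : ℝ)| < (2 : ℝ)⁻¹ ^ n

/-- The real number `2^{-A}`. -/
def realOfSet (A : Set ℕ) : ℝ := ∑' a : A, (2 : ℝ)⁻¹ ^ ((a : ℕ) + 1)

/-- A set is regainingly approximable if it is c.e. and `2^{-A}` is regainingly approximable. -/
def RegainApproxSet (A : Set ℕ) : Prop :=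
  REPred (· ∈ A) ∧ RegainApprox (realOfSet A)

namespace Stmt5Aux

open Encodable Denumerable

/-! ### Generic: `Nat.nth` of a computably decidable infinite set is computable -/

theorem count_computable {p : ℕ → Prop} [DecidablePred p]
    (hp : Computable fun n => decide (p n)) : Computable (Nat.count p) := by
  have h : Computable fun n : ℕ =>
      Nat.rec (motive := fun _ => ℕ) 0 (fun y IH => IH + Bool.rec 0 1 (decide (p y))) n := by
    have := Computable.nat_rec (α := ℕ) (f := @id ℕ) (g := fun _ => 0)
      (h := fun _ q => q.2 + Bool.rec 0 1 (decide (p q.1)))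
      Computable.id (Computable.const 0)
      (Primrec.nat_add.to_comp.comp (Computable.snd.comp Computable.snd)
        ((Computable.cond (hp.comp (Computable.fst.comp Computable.snd))
          (Computable.const 1) (Computable.const 0)).of_eq
            (fun a => by cases hh : decide (p a.2.1) <;> simp [hh])))
    exact this
  exact h.of_eq fun n => by
    induction n with
    | zero => simp [Nat.count]
    | succ n ih =>
      show (Nat.rec (motive := fun _ => ℕ) 0 _ n) + _ = _
      rw [ih, Nat.count_succ]
      by_cases hh : p n <;> simp [hh]

theorem nth_computable {p : ℕ → Prop} [DecidablePred p]
    (hp : Computable fun n => decide (p n)) (hinf : (setOf p).Infinite) :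
    Computable (Nat.nth p) := by
  classical
  set F : ℕ → ℕ → Option ℕ := fun n k =>
    bif decide (p k) && (Nat.count p k == n) then some k else none with hF
  have hFc : Computable₂ F := by
    apply Computable.cond
      ((Primrec.and.to_comp.comp (hp.comp Computable.snd))
        (Primrec.beq.to_comp.comp ((count_computable hp).comp Computable.snd) Computable.fst))
      (Primrec.option_some.to_comp.comp Computable.snd) (Computable.const none)
  have hpart : Partrec fun n => Nat.rfindOpt (F n) := Partrec.rfindOpt hFc
  apply hpart.of_eq_tot
  intro n
  have hmem : (Nat.nth p n) ∈ F n (Nat.nth p n) := by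
    simp [hF, Nat.nth_mem_of_infinite hinf n, Nat.count_nth_of_infinite hinf n]
  have hdom : (Nat.rfindOpt (F n)).Dom :=
    Nat.rfindOpt_dom.mpr ⟨_, _, hmem⟩
  set a := (Nat.rfindOpt (F n)).get hdom with hadef
  have ha : a ∈ Nat.rfindOpt (F n) := ⟨hdom, rfl⟩
  obtain ⟨k, hk⟩ := Nat.rfindOpt_spec ha
  have : p k ∧ Nat.count p k = n ∧ a = k := by
    by_cases h1 : decide (p k) && (Nat.count p k == n)
    · simp only [hF, h1, cond_true, Option.mem_def, Option.some.injEq] at hk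
      simp only [Bool.and_eq_true, decide_eq_true_eq, beq_iff_eq] at h1
      exact ⟨h1.1, h1.2, hk.symm⟩
    · simp [hF, Bool.eq_false_iff.mpr h1] at hk
  have : a = Nat.nth p n := by
    rcases this with ⟨h1, h2, h3⟩
    rw [h3, ← h2, Nat.nth_count h1]
  exact this ▸ ha

/-! ### Integer codes -/

def toRep (c : ℕ) : ℕ × ℕ := if c % 2 = 0 then (c / 2, 0) else (0, c / 2 + 1)

def vl (p : ℕ × ℕ) : ℤ := (p.1 : ℤ) - p.2

theorem encode_int_ofNat (n : ℕ) : Encodable.encode (Int.ofNat n) = 2 * n := rfl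
theorem encode_int_negSucc (n : ℕ) : Encodable.encode (Int.negSucc n) = 2 * n + 1 := rfl
theorem encode_int_natCast (n : ℕ) : Encodable.encode ((n : ℕ) : ℤ) = 2 * n := rfl

theorem toRep_encode (z : ℤ) : toRep (Encodable.encode z) = (z.toNat, (-z).toNat) := by
  cases z with
  | ofNat n =>
    rw [encode_int_ofNat, toRep, if_pos (by omega)]
    refine Prod.ext ?_ ?_ <;> simp only [Int.ofNat_eq_natCast] <;> omega
  | negSucc n =>
    rw [encode_int_negSucc, toRep, if_neg (by omega), Int.negSucc_eq]
    refine Prod.ext ?_ ?_ <;> omega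

theorem primrec_toRep : Primrec toRep := by
  unfold toRep
  exact Primrec.ite (Primrec.eq.comp (Primrec.nat_mod.comp .id (.const 2)) (Primrec.const 0))
    (Primrec.pair (Primrec.nat_div.comp .id (.const 2)) (.const 0))
    (Primrec.pair (.const 0) (Primrec.succ.comp (Primrec.nat_div.comp .id (.const 2))))

theorem primrec_vl : Primrec vl := by
  rw [← Primrec.encode_iff]
  have h : Primrec fun p : ℕ × ℕ =>
      if p.2 ≤ p.1 then 2 * (p.1 - p.2) else 2 * (p.2 - p.1) - 1 :=
    Primrec.ite (Primrec.nat_le.comp Primrec.snd Primrec.fst)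
      (Primrec.nat_double.comp (Primrec.nat_sub.comp Primrec.fst Primrec.snd))
      (Primrec.nat_sub.comp
        (Primrec.nat_double.comp (Primrec.nat_sub.comp Primrec.snd Primrec.fst)) (.const 1))
  apply h.of_eq
  rintro ⟨a, b⟩
  by_cases hab : b ≤ a
  · obtain ⟨k, rfl⟩ := Nat.le.dest hab
    have h' : vl (b + k, b) = ((k : ℕ) : ℤ) := by simp only [vl]; push_cast; ring
    rw [h', encode_int_natCast, if_pos hab]
    omega
  · have : vl (a, b) = Int.negSucc (b - a - 1) := by
      simp only [vl, Int.negSucc_eq]; push_cast; omega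
    rw [this, encode_int_negSucc, if_neg hab]
    omega

theorem primrec_rep_of : Primrec (fun z : ℤ => (z.toNat, (-z).toNat)) :=
  (primrec_toRep.comp Primrec.encode).of_eq toRep_encode

theorem rep_spec (z : ℤ) : (z.toNat : ℤ) - (-z).toNat = z := by omega

theorem primrec_zadd : Primrec₂ ((· + ·) : ℤ → ℤ → ℤ) := by
  have h : Primrec fun p : ℤ × ℤ =>
      vl (p.1.toNat + p.2.toNat, (-p.1).toNat + (-p.2).toNat) := by
    apply primrec_vl.comp
    exact Primrec.pair
      (Primrec.nat_add.comp (Primrec.fst.comp (primrec_rep_of.comp Primrec.fst))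
        (Primrec.fst.comp (primrec_rep_of.comp Primrec.snd)))
      (Primrec.nat_add.comp (Primrec.snd.comp (primrec_rep_of.comp Primrec.fst))
        (Primrec.snd.comp (primrec_rep_of.comp Primrec.snd)))
  exact Primrec₂.mk <| h.of_eq fun p => by simp only [vl]; push_cast; omega

theorem primrec_zmul : Primrec₂ ((· * ·) : ℤ → ℤ → ℤ) := by
  have h : Primrec fun p : ℤ × ℤ =>
      vl (p.1.toNat * p.2.toNat + (-p.1).toNat * (-p.2).toNat,
          p.1.toNat * (-p.2).toNat + (-p.1).toNat * p.2.toNat) := by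
    apply primrec_vl.comp
    have f1 := Primrec.fst.comp (primrec_rep_of.comp (Primrec.fst (α := ℤ) (β := ℤ)))
    have g1 := Primrec.snd.comp (primrec_rep_of.comp (Primrec.fst (α := ℤ) (β := ℤ)))
    have f2 := Primrec.fst.comp (primrec_rep_of.comp (Primrec.snd (α := ℤ) (β := ℤ)))
    have g2 := Primrec.snd.comp (primrec_rep_of.comp (Primrec.snd (α := ℤ) (β := ℤ)))
    exact Primrec.pair
      (Primrec.nat_add.comp (Primrec.nat_mul.comp f1 f2) (Primrec.nat_mul.comp g1 g2))
      (Primrec.nat_add.comp (Primrec.nat_mul.comp f1 g2) (Primrec.nat_mul.comp g1 f2))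
  apply Primrec₂.mk <| h.of_eq fun p => ?_
  simp only [vl]
  push_cast
  conv_rhs => rw [← rep_spec p.1, ← rep_spec p.2]
  ring

theorem primrec_zle : Primrec₂ fun z w : ℤ => decide (z ≤ w) := by
  have h : Primrec fun p : ℤ × ℤ =>
      decide (p.1.toNat + (-p.2).toNat ≤ p.2.toNat + (-p.1).toNat) := by
    refine PrimrecPred.decide (Primrec.nat_le.comp ?_ ?_)
    · exact Primrec.nat_add.comp (Primrec.fst.comp (primrec_rep_of.comp Primrec.fst))
        (Primrec.snd.comp (primrec_rep_of.comp Primrec.snd))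
    · exact Primrec.nat_add.comp (Primrec.fst.comp (primrec_rep_of.comp Primrec.snd))
        (Primrec.snd.comp (primrec_rep_of.comp Primrec.fst))
  apply Primrec₂.mk <| h.of_eq fun p => ?_
  rw [decide_eq_decide]
  omega

theorem primrec_zlt : Primrec₂ fun z w : ℤ => decide (z < w) := by
  have := primrec_zle.comp (Primrec.snd (α := ℤ) (β := ℤ)) (Primrec.fst (α := ℤ) (β := ℤ))
  exact Primrec₂.mk <| (Primrec.not.comp this).of_eq fun p => by
    rw [← decide_not, decide_eq_decide]
    exact not_le

theorem primrec_intCast : Primrec (fun n : ℕ => (n : ℤ)) := by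
  have h : Primrec fun n : ℕ => vl (n, 0) := primrec_vl.comp (Primrec.pair .id (.const 0))
  exact h.of_eq fun n => by simp [vl]

theorem primrec_pow2 : Primrec (fun n : ℕ => 2 ^ n) := by
  have : Primrec (fun n : ℕ => Nat.rec (motive := fun _ => ℕ) 1 (fun _ ih => 2 * ih) n) :=
    Primrec.nat_rec₁ 1 (Primrec.nat_double.comp Primrec.snd).to₂
  exact this.of_eq fun n => by
    induction n with
    | zero => rfl
    | succ n ih =>
      show 2 * (Nat.rec (motive := fun _ => ℕ) 1 (fun _ ih => 2 * ih) n) = 2 ^ (n + 1)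
      rw [ih, pow_succ, Nat.mul_comm]

theorem primrec_zpow2 : Primrec (fun n : ℕ => (2 ^ n : ℤ)) :=
  (primrec_intCast.comp primrec_pow2).of_eq fun n => by push_cast; ring

/-! ### gcd -/

private def gstep (p : ℕ × ℕ) : ℕ × ℕ := if p.2 = 0 then p else (p.2, p.1 % p.2)

private theorem gstep_primrec : Primrec gstep :=
  Primrec.ite (Primrec.eq.comp Primrec.snd (Primrec.const 0)) Primrec.id
    (Primrec.pair Primrec.snd (Primrec.nat_mod.comp Primrec.fst Primrec.snd))

private theorem gstep_iter : ∀ n : ℕ, ∀ a b : ℕ, b ≤ n → (gstep^[n + 1] (a, b)).1 = Nat.gcd a b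
  | 0, a, b, hb => by
    interval_cases b
    simp [gstep]
  | n + 1, a, b, hb => by
    rcases Nat.eq_zero_or_pos b with rfl | hbpos
    · have h0 : gstep (a, 0) = (a, 0) := by simp [gstep]
      rw [Function.iterate_succ_apply, h0, gstep_iter n a 0 (Nat.zero_le n)]
    · have h1 : gstep (a, b) = (b, a % b) := by simp [gstep, Nat.pos_iff_ne_zero.mp hbpos]
      rw [Function.iterate_succ_apply, h1, gstep_iter n b (a % b)
        (Nat.le_of_lt_succ (lt_of_lt_of_le (Nat.mod_lt _ hbpos) hb))]
      rw [Nat.gcd_comm b (a % b), ← Nat.gcd_rec b a]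
      exact Nat.gcd_comm b a

theorem primrec_gcd : Primrec₂ Nat.gcd := by
  have h : Primrec (fun p : ℕ × ℕ => ((fun q => gstep q)^[p.2 + 1] (id p)).1) := by
    have := Primrec.nat_iterate (α := ℕ × ℕ) (β := ℕ × ℕ)
      (f := fun p => p.2 + 1) (g := id) (h := fun _ q => gstep q)
      (Primrec.succ.comp Primrec.snd) Primrec.id (gstep_primrec.comp Primrec.snd).to₂
    exact Primrec.fst.comp this
  exact Primrec₂.mk (h.of_eq fun p => gstep_iter p.2 p.1 p.2 le_rfl)

/-! ### The ℚ encoding -/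

abbrev e₁ : ℚ → ℕ := @Encodable.encode ℚ Rat.instEncodable
abbrev S : Set ℕ := Set.range e₁

instance : DecidablePred (· ∈ S) := @Encodable.decidableRangeEncode ℚ Rat.instEncodable
instance : Infinite S := Infinite.of_injective _ (Equiv.ofInjective _ encode_injective).injective
instance : Infinite ↑{x | x ∈ S} := inferInstanceAs (Infinite S)

theorem Sinf : (setOf (· ∈ S)).Infinite := Set.infinite_coe_iff.mp (inferInstanceAs (Infinite S))

theorem e₁_eq (q : ℚ) : e₁ q = Nat.pair (Encodable.encode q.num) q.den := rfl

theorem key (n : ℕ) : e₁ (Denumerable.ofNat ℚ n) = Nat.nth (· ∈ S) n := by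
  letI := Nat.Subtype.denumerable S
  have h1 : e₁ (Denumerable.ofNat ℚ n) = ↑(Nat.Subtype.ofNat S n) := by
    show e₁ ((equivRangeEncode ℚ).symm (Denumerable.ofNat (↥S) n)) = _
    rw [Denumerable.ofEquiv_ofNat]
    have h2 : ∀ x : ↥S, e₁ ((equivRangeEncode ℚ).symm x) = ↑x := fun x =>
      congrArg Subtype.val (Equiv.apply_symm_apply (equivRangeEncode ℚ) x)
    rw [h2]
    show (Nat.Subtype.ofNat S (Denumerable.ofNat ℕ n) : ℕ) = _
    rw [Denumerable.ofNat_nat]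
  rw [h1, Nat.nth_apply_eq_orderIsoOfNat Sinf, Nat.Subtype.orderIsoOfNat_apply]
  rfl

/-- concrete characterization of membership in `S` -/
theorem mem_S_iff (x : ℕ) :
    x ∈ S ↔ x.unpair.2 ≠ 0 ∧
      Nat.gcd ((toRep x.unpair.1).1 + (toRep x.unpair.1).2) x.unpair.2 = 1 := by
  constructor
  · rintro ⟨q, rfl⟩
    rw [e₁_eq, Nat.unpair_pair]
    refine ⟨q.den_nz, ?_⟩
    rw [toRep_encode]
    have : q.num.toNat + (-q.num).toNat = q.num.natAbs := by omega
    rw [this]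
    exact q.reduced
  · rintro ⟨h2, hg⟩
    set z : ℤ := vl (toRep x.unpair.1) with hz
    have hez : Encodable.encode z = x.unpair.1 := by
      rw [hz]
      unfold toRep
      by_cases hp : x.unpair.1 % 2 = 0
      · rw [if_pos hp]
        have h' : vl (x.unpair.1 / 2, 0) = ((x.unpair.1 / 2 : ℕ) : ℤ) := by
          simp only [vl]; omega
        rw [h', encode_int_natCast]
        omega
      · rw [if_neg hp]
        have : vl (0, x.unpair.1 / 2 + 1) = Int.negSucc (x.unpair.1 / 2) := by
          simp [vl, Int.negSucc_eq]
        rw [this, encode_int_negSucc]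
        omega
    have habs : z.natAbs = (toRep x.unpair.1).1 + (toRep x.unpair.1).2 := by
      rw [hz]; unfold toRep
      by_cases hp : x.unpair.1 % 2 = 0 <;> simp only [hp, if_true, if_false, vl] <;> omega
    refine ⟨Rat.mk' z x.unpair.2 h2 (by rw [habs]; exact hg), ?_⟩
    rw [e₁_eq]
    show Nat.pair (Encodable.encode z) x.unpair.2 = x
    rw [hez, Nat.pair_unpair]

theorem S_primrec : Primrec fun x : ℕ => decide (x ∈ S) := by
  have h : Primrec fun x : ℕ =>
      decide (x.unpair.2 ≠ 0 ∧
        Nat.gcd ((toRep x.unpair.1).1 + (toRep x.unpair.1).2) x.unpair.2 = 1) := by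
    have hu2 : Primrec fun x : ℕ => x.unpair.2 := Primrec.snd.comp Primrec.unpair
    have hr : Primrec fun x : ℕ => toRep x.unpair.1 :=
      primrec_toRep.comp (Primrec.fst.comp Primrec.unpair)
    have hgc : Primrec fun x : ℕ =>
        Nat.gcd ((toRep x.unpair.1).1 + (toRep x.unpair.1).2) x.unpair.2 :=
      primrec_gcd.comp (Primrec.nat_add.comp (Primrec.fst.comp hr) (Primrec.snd.comp hr)) hu2
    have d1 : Primrec fun x : ℕ => decide (x.unpair.2 ≠ 0) := by
      have := Primrec.not.comp ((Primrec.eq (α := ℕ)).comp hu2 (Primrec.const 0)).decide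
      exact this.of_eq fun x => by simp
    have d2 : Primrec fun x : ℕ =>
        decide (Nat.gcd ((toRep x.unpair.1).1 + (toRep x.unpair.1).2) x.unpair.2 = 1) :=
      ((Primrec.eq (α := ℕ)).comp hgc (Primrec.const 1)).decide
    exact (Primrec.and.comp d1 d2).of_eq fun x => by
      by_cases hA : x.unpair.2 ≠ 0 <;>
        by_cases hB : Nat.gcd ((toRep x.unpair.1).1 + (toRep x.unpair.1).2) x.unpair.2 = 1 <;>
        simp [hA, hB]
  exact h.of_eq fun x => by rw [decide_eq_decide]; exact (mem_S_iff x).symm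

/-- `Nat.nth (· ∈ S)` is computable. -/
theorem nthS_computable : Computable (Nat.nth (· ∈ S)) :=
  nth_computable S_primrec.to_comp Sinf

/-- The fundamental destructor: `q ↦ (q.num, q.den)` is computable. -/
theorem numden_computable : Computable fun q : ℚ => (q.num, q.den) := by
  rw [← Computable.encode_iff]
  have h : Computable fun q : ℚ =>
      Nat.nth (· ∈ S) (@Encodable.encode ℚ Primcodable.toEncodable q) :=
    nthS_computable.comp Computable.encode
  apply h.of_eq fun q => ?_
  have h1 : Nat.nth (· ∈ S) (@Encodable.encode ℚ Primcodable.toEncodable q) = e₁ q := by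
    conv_rhs => rw [← Denumerable.ofNat_encode (α := ℚ) q]
    exact (key _).symm
  rw [h1, e₁_eq]
  rfl

theorem num_computable : Computable Rat.num := Computable.fst.comp numden_computable
theorem den_computable : Computable Rat.den := Computable.snd.comp numden_computable

end Stmt5Aux

namespace Part2
open Stmt5Aux

theorem master_le (u v : ℚ) (w x : ℤ) (j k : ℕ) :
    u + (w : ℚ) / 2 ^ j ≤ v + (x : ℚ) / 2 ^ k ↔
      u.num * v.den * 2 ^ (j + k) + w * (u.den * v.den * 2 ^ k) ≤
        v.num * u.den * 2 ^ (j + k) + x * (u.den * v.den * 2 ^ j) := by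
  have hu : (0:ℚ) < (u.den : ℚ) := by exact_mod_cast u.pos
  have hv : (0:ℚ) < (v.den : ℚ) := by exact_mod_cast v.pos
  have h2j : (0:ℚ) < 2 ^ j := by positivity
  have h2k : (0:ℚ) < 2 ^ k := by positivity
  conv_lhs => rw [← Rat.num_div_den u, ← Rat.num_div_den v]
  rw [div_add_div _ _ (ne_of_gt hu) (ne_of_gt h2j), div_add_div _ _ (ne_of_gt hv) (ne_of_gt h2k),
    div_le_div_iff₀ (by positivity) (by positivity)]
  rw [show ((u.num:ℚ) * 2 ^ j + u.den * w) * (v.den * 2 ^ k)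
      = ((u.num * v.den * 2 ^ (j + k) + w * (u.den * v.den * 2 ^ k) : ℤ) : ℚ) by
    push_cast [pow_add]; ring]
  rw [show ((v.num:ℚ) * 2 ^ k + v.den * x) * (u.den * 2 ^ j)
      = ((v.num * u.den * 2 ^ (j + k) + x * (u.den * v.den * 2 ^ j) : ℤ) : ℚ) by
    push_cast [pow_add]; ring]
  exact Int.cast_le

theorem master_lt (u v : ℚ) (w x : ℤ) (j k : ℕ) :
    u + (w : ℚ) / 2 ^ j < v + (x : ℚ) / 2 ^ k ↔
      u.num * v.den * 2 ^ (j + k) + w * (u.den * v.den * 2 ^ k) <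
        v.num * u.den * 2 ^ (j + k) + x * (u.den * v.den * 2 ^ j) := by
  have hu : (0:ℚ) < (u.den : ℚ) := by exact_mod_cast u.pos
  have hv : (0:ℚ) < (v.den : ℚ) := by exact_mod_cast v.pos
  have h2j : (0:ℚ) < 2 ^ j := by positivity
  have h2k : (0:ℚ) < 2 ^ k := by positivity
  conv_lhs => rw [← Rat.num_div_den u, ← Rat.num_div_den v]
  rw [div_add_div _ _ (ne_of_gt hu) (ne_of_gt h2j), div_add_div _ _ (ne_of_gt hv) (ne_of_gt h2k),
    div_lt_div_iff₀ (by positivity) (by positivity)]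
  rw [show ((u.num:ℚ) * 2 ^ j + u.den * w) * (v.den * 2 ^ k)
      = ((u.num * v.den * 2 ^ (j + k) + w * (u.den * v.den * 2 ^ k) : ℤ) : ℚ) by
    push_cast [pow_add]; ring]
  rw [show ((v.num:ℚ) * 2 ^ k + v.den * x) * (u.den * 2 ^ j)
      = ((v.num * u.den * 2 ^ (j + k) + x * (u.den * v.den * 2 ^ j) : ℤ) : ℚ) by
    push_cast [pow_add]; ring]
  exact Int.cast_lt

section tests
variable {γ : Type} [Primcodable γ] {u v : γ → ℚ} {j k : γ → ℕ}

private def zlhs (u v : γ → ℚ) (j k : γ → ℕ) (w : ℤ) (s : γ) : ℤ :=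
  (u s).num * ((v s).den : ℤ) * 2 ^ (j s + k s) +
    w * (((u s).den : ℤ) * ((v s).den : ℤ) * 2 ^ k s)

private theorem zlhs_computable (hu : Computable u) (hv : Computable v)
    (hj : Computable j) (hk : Computable k) (w : ℤ) : Computable (zlhs u v j k w) := by
  have hnum : Computable fun s => (u s).num := num_computable.comp hu
  have hdu : Computable fun s => ((u s).den : ℤ) :=
    primrec_intCast.to_comp.comp (den_computable.comp hu)
  have hdv : Computable fun s => ((v s).den : ℤ) :=
    primrec_intCast.to_comp.comp (den_computable.comp hv)
  have hpjk : Computable fun s => (2 ^ (j s + k s) : ℤ) :=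
    primrec_zpow2.to_comp.comp (Primrec.nat_add.to_comp.comp hj hk)
  have hpk : Computable fun s => (2 ^ k s : ℤ) := primrec_zpow2.to_comp.comp hk
  have m1 : Computable fun s => (u s).num * ((v s).den : ℤ) * 2 ^ (j s + k s) :=
    primrec_zmul.to_comp.comp (primrec_zmul.to_comp.comp hnum hdv) hpjk
  have m2 : Computable fun s => w * (((u s).den : ℤ) * ((v s).den : ℤ) * 2 ^ k s) :=
    primrec_zmul.to_comp.comp (Computable.const w)
      (primrec_zmul.to_comp.comp (primrec_zmul.to_comp.comp hdu hdv) hpk)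
  exact primrec_zadd.to_comp.comp m1 m2

theorem test_le (hu : Computable u) (hv : Computable v)
    (hj : Computable j) (hk : Computable k) (w x : ℤ) :
    Computable fun s => decide (u s + (w : ℚ) / 2 ^ j s ≤ v s + (x : ℚ) / 2 ^ k s) := by
  have h : Computable fun s => decide (zlhs u v j k w s ≤ zlhs v u k j x s) := by
    have h1 := zlhs_computable hu hv hj hk w
    have h2 := zlhs_computable hv hu hk hj x
    exact primrec_zle.to_comp.comp h1 h2
  apply h.of_eq fun s => ?_
  rw [decide_eq_decide]
  unfold zlhs
  rw [Nat.add_comm (k s) (j s), mul_comm (((v s).den : ℤ)) (((u s).den : ℤ))]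
  exact (master_le (u s) (v s) w x (j s) (k s)).symm

theorem test_lt (hu : Computable u) (hv : Computable v)
    (hj : Computable j) (hk : Computable k) (w x : ℤ) :
    Computable fun s => decide (u s + (w : ℚ) / 2 ^ j s < v s + (x : ℚ) / 2 ^ k s) := by
  have h : Computable fun s => decide (zlhs u v j k w s < zlhs v u k j x s) := by
    have h1 := zlhs_computable hu hv hj hk w
    have h2 := zlhs_computable hv hu hk hj x
    exact primrec_zlt.to_comp.comp h1 h2
  apply h.of_eq fun s => ?_
  rw [decide_eq_decide]
  unfold zlhs
  rw [Nat.add_comm (k s) (j s), mul_comm (((v s).den : ℤ)) (((u s).den : ℤ))]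
  exact (master_lt (u s) (v s) w x (j s) (k s)).symm

end tests
end Part2

section Main
open Filter Stmt5Aux Part2

theorem decide_inst_irrel {P : Prop} (i1 i2 : Decidable P) : @decide P i1 = @decide P i2 := by
  cases Subsingleton.elim i1 i2; rfl

theorem main_thm (α : ℝ) (a : ℕ → ℚ) (ha : Computable a) (hmono : Monotone a)
    (hlim : Tendsto (fun n => (a n : ℝ)) atTop (nhds α))
    (hio : ∃ᶠ n in atTop, α - (a n : ℝ) < (2 : ℝ)⁻¹ ^ n) :
    List.TFAE
      [ ∃ b : ℕ → ℚ, Computable b ∧ ∀ n, |α - (b n : ℝ)| < (2 : ℝ)⁻¹ ^ n,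
        ComputablePred (fun n => α - (a n : ℝ) < (2 : ℝ)⁻¹ ^ n),
        ∃ r : ℕ → ℕ, Computable r ∧
          ∀ n, Nat.nth (fun m => α - (a m : ℝ) < (2 : ℝ)⁻¹ ^ m) n ≤ r n ] := by
  have hmono' : Monotone fun n => (a n : ℝ) := fun i j h => Rat.cast_le.mpr (hmono h)
  have hub : ∀ n, (a n : ℝ) ≤ α := hmono'.ge_of_tendsto hlim
  have hinf : {n : ℕ | α - (a n : ℝ) < (2 : ℝ)⁻¹ ^ n}.Infinite :=
    Nat.frequently_atTop_iff_infinite.mp hio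
  have hside : ∀ (u : ℚ) (w : ℤ) (jj : ℕ),
      ((u + (w : ℚ) / 2 ^ jj : ℚ) : ℝ) = (u : ℝ) + (w : ℝ) * (2 : ℝ)⁻¹ ^ jj := by
    intro u w jj
    push_cast
    rw [inv_pow, div_eq_mul_inv]
  have hQRle : ∀ (u v : ℚ) (w x : ℤ) (jj kk : ℕ),
      (u + (w : ℚ) / 2 ^ jj ≤ v + (x : ℚ) / 2 ^ kk) ↔
        ((u : ℝ) + (w : ℝ) * (2 : ℝ)⁻¹ ^ jj ≤ (v : ℝ) + (x : ℝ) * (2 : ℝ)⁻¹ ^ kk) := by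
    intro u v w x jj kk
    rw [← Rat.cast_le (K := ℝ), hside, hside]
  have hQRlt : ∀ (u v : ℚ) (w x : ℤ) (jj kk : ℕ),
      (u + (w : ℚ) / 2 ^ jj < v + (x : ℚ) / 2 ^ kk) ↔
        ((u : ℝ) + (w : ℝ) * (2 : ℝ)⁻¹ ^ jj < (v : ℝ) + (x : ℝ) * (2 : ℝ)⁻¹ ^ kk) := by
    intro u v w x jj kk
    rw [← Rat.cast_lt (K := ℝ), hside, hside]
  tfae_have 1 → 2 := by
    rintro ⟨b, hb, hab⟩
    have habove : ∀ m, α < (b m : ℝ) + (2 : ℝ)⁻¹ ^ m := fun m => by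
      have := (abs_lt.mp (hab m)).2; linarith
    have hbelow : ∀ m, (b m : ℝ) - (2 : ℝ)⁻¹ ^ m < α := fun m => by
      have := (abs_lt.mp (hab m)).1; linarith
    by_cases hrat : ∃ q : ℚ, α = (q : ℝ)
    · obtain ⟨q0, rfl⟩ := hrat
      refine ⟨Classical.decPred _, ?_⟩
      have ht := Part2.test_lt (u := fun _ : ℕ => q0) (v := a) (j := fun _ => 0) (k := id)
        (Computable.const q0) ha (Computable.const 0) Computable.id 0 1
      apply ht.of_eq fun n => ?_
      rw [decide_eq_decide, hQRlt]
      simp only [Int.cast_zero, Int.cast_one, zero_mul, one_mul, add_zero, id]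
      exact sub_lt_iff_lt_add'.symm
    · push_neg at hrat
      set F : ℕ → ℕ → Option Bool := fun n m =>
        bif decide (b m + ((1 : ℤ) : ℚ) / 2 ^ m ≤ a n + ((1 : ℤ) : ℚ) / 2 ^ n) then some true
        else bif decide (a n + ((1 : ℤ) : ℚ) / 2 ^ n ≤ b m + ((-1 : ℤ) : ℚ) / 2 ^ m) then
          some false
        else none with hF
      have t1 : Computable fun s : ℕ × ℕ =>
          decide (b s.2 + ((1 : ℤ) : ℚ) / 2 ^ s.2 ≤ a s.1 + ((1 : ℤ) : ℚ) / 2 ^ s.1) :=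
        Part2.test_le (hb.comp Computable.snd) (ha.comp Computable.fst)
          Computable.snd Computable.fst 1 1
      have t2 : Computable fun s : ℕ × ℕ =>
          decide (a s.1 + ((1 : ℤ) : ℚ) / 2 ^ s.1 ≤ b s.2 + ((-1 : ℤ) : ℚ) / 2 ^ s.2) :=
        Part2.test_le (ha.comp Computable.fst) (hb.comp Computable.snd)
          Computable.fst Computable.snd 1 (-1)
      have hFc : Computable₂ F := Computable₂.mk <|
        Computable.cond t1 (Computable.const (some true))
          (Computable.cond t2 (Computable.const (some false)) (Computable.const none))
      have hFtrue : ∀ n m, (b m + ((1 : ℤ) : ℚ) / 2 ^ m ≤ a n + ((1 : ℤ) : ℚ) / 2 ^ n) →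
          F n m = some true := by
        intro n m h
        show (bif decide (b m + ((1 : ℤ) : ℚ) / 2 ^ m ≤ a n + ((1 : ℤ) : ℚ) / 2 ^ n) then
            some true
          else bif decide (a n + ((1 : ℤ) : ℚ) / 2 ^ n ≤ b m + ((-1 : ℤ) : ℚ) / 2 ^ m) then
            some false
          else none) = some true
        rw [decide_eq_true h]
        rfl
      have hFfalse : ∀ n m, ¬ (b m + ((1 : ℤ) : ℚ) / 2 ^ m ≤ a n + ((1 : ℤ) : ℚ) / 2 ^ n) →
          (a n + ((1 : ℤ) : ℚ) / 2 ^ n ≤ b m + ((-1 : ℤ) : ℚ) / 2 ^ m) →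
          F n m = some false := by
        intro n m h1 h2
        show (bif decide (b m + ((1 : ℤ) : ℚ) / 2 ^ m ≤ a n + ((1 : ℤ) : ℚ) / 2 ^ n) then
            some true
          else bif decide (a n + ((1 : ℤ) : ℚ) / 2 ^ n ≤ b m + ((-1 : ℤ) : ℚ) / 2 ^ m) then
            some false
          else none) = some false
        rw [decide_eq_false h1, decide_eq_true h2]
        rfl
      have hFnone : ∀ n m, ¬ (b m + ((1 : ℤ) : ℚ) / 2 ^ m ≤ a n + ((1 : ℤ) : ℚ) / 2 ^ n) →
          ¬ (a n + ((1 : ℤ) : ℚ) / 2 ^ n ≤ b m + ((-1 : ℤ) : ℚ) / 2 ^ m) →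
          F n m = none := by
        intro n m h1 h2
        show (bif decide (b m + ((1 : ℤ) : ℚ) / 2 ^ m ≤ a n + ((1 : ℤ) : ℚ) / 2 ^ n) then
            some true
          else bif decide (a n + ((1 : ℤ) : ℚ) / 2 ^ n ≤ b m + ((-1 : ℤ) : ℚ) / 2 ^ m) then
            some false
          else none) = none
        rw [decide_eq_false h1, decide_eq_false h2]
        rfl
      have hs1 : ∀ n m, (b m + ((1 : ℤ) : ℚ) / 2 ^ m ≤ a n + ((1 : ℤ) : ℚ) / 2 ^ n) →
          α - (a n : ℝ) < (2 : ℝ)⁻¹ ^ n := by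
        intro n m h
        rw [hQRle] at h
        simp only [Int.cast_one, one_mul] at h
        have h1 := habove m
        linarith
      have hs2 : ∀ n m, (a n + ((1 : ℤ) : ℚ) / 2 ^ n ≤ b m + ((-1 : ℤ) : ℚ) / 2 ^ m) →
          ¬ (α - (a n : ℝ) < (2 : ℝ)⁻¹ ^ n) := by
        intro n m h
        rw [hQRle] at h
        simp only [Int.cast_one, Int.cast_neg, one_mul, neg_mul] at h
        have h1 := hbelow m
        intro hcon
        linarith
      have htot : ∀ n, ∃ m bv, bv ∈ F n m := by
        intro n
        have hne : α ≠ (a n : ℝ) + (2 : ℝ)⁻¹ ^ n := by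
          intro hcon
          refine hrat (a n + (1 : ℚ) / 2 ^ n) ?_
          rw [hcon]
          push_cast
          rw [inv_pow, one_div]
        rcases lt_or_gt_of_ne hne with hlt | hgt
        · have hε : (0 : ℝ) < ((a n : ℝ) + (2 : ℝ)⁻¹ ^ n - α) / 2 := by linarith
          obtain ⟨m, hm⟩ := exists_pow_lt_of_lt_one hε (by norm_num : (2 : ℝ)⁻¹ < 1)
          have hq : b m + ((1 : ℤ) : ℚ) / 2 ^ m ≤ a n + ((1 : ℤ) : ℚ) / 2 ^ n := by
            rw [hQRle]
            simp only [Int.cast_one, one_mul]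
            have := hbelow m
            linarith
          exact ⟨m, true, by rw [hFtrue n m hq]; rfl⟩
        · have hε : (0 : ℝ) < (α - ((a n : ℝ) + (2 : ℝ)⁻¹ ^ n)) / 2 := by linarith
          obtain ⟨m, hm⟩ := exists_pow_lt_of_lt_one hε (by norm_num : (2 : ℝ)⁻¹ < 1)
          have hq2 : a n + ((1 : ℤ) : ℚ) / 2 ^ n ≤ b m + ((-1 : ℤ) : ℚ) / 2 ^ m := by
            rw [hQRle]
            simp only [Int.cast_one, Int.cast_neg, one_mul, neg_mul]
            have := habove m
            linarith
          by_cases hd : b m + ((1 : ℤ) : ℚ) / 2 ^ m ≤ a n + ((1 : ℤ) : ℚ) / 2 ^ n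
          · exact ⟨m, true, by rw [hFtrue n m hd]; rfl⟩
          · exact ⟨m, false, by rw [hFfalse n m hd hq2]; rfl⟩
      refine ⟨Classical.decPred _, ?_⟩
      apply (Partrec.rfindOpt hFc).of_eq_tot
      intro n
      have key2 : ∀ i : Decidable (α - (a n : ℝ) < (2 : ℝ)⁻¹ ^ n),
          @decide _ i ∈ Nat.rfindOpt (F n) := by
        intro i
        obtain ⟨m0, bv0, hbv0⟩ := htot n
        have hdom : (Nat.rfindOpt (F n)).Dom := Nat.rfindOpt_dom.mpr ⟨m0, bv0, hbv0⟩
        have hmem : (Nat.rfindOpt (F n)).get hdom ∈ Nat.rfindOpt (F n) := ⟨hdom, rfl⟩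
        obtain ⟨m, hm⟩ := Nat.rfindOpt_spec hmem
        have hget : (Nat.rfindOpt (F n)).get hdom = @decide _ i := by
          by_cases hd1 : b m + ((1 : ℤ) : ℚ) / 2 ^ m ≤ a n + ((1 : ℤ) : ℚ) / 2 ^ n
          · have hFm : F n m = some true := hFtrue n m hd1
            rw [hFm, Option.mem_some_iff] at hm
            rw [← hm]
            exact (@decide_eq_true _ i (hs1 n m hd1)).symm
          · by_cases hd2 : a n + ((1 : ℤ) : ℚ) / 2 ^ n ≤ b m + ((-1 : ℤ) : ℚ) / 2 ^ m
            · have hFm : F n m = some false := hFfalse n m hd1 hd2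
              rw [hFm, Option.mem_some_iff] at hm
              rw [← hm]
              exact (@decide_eq_false _ i (hs2 n m hd2)).symm
            · have hFm : F n m = none := hFnone n m hd1 hd2
              rw [hFm] at hm
              exact absurd hm (by simp)
        rw [← hget]
        exact hmem
      exact key2 _
  tfae_have 2 → 3 := by
    rintro ⟨D, hD⟩
    exact ⟨Nat.nth _, @Stmt5Aux.nth_computable _ D hD hinf, fun n => le_rfl⟩
  tfae_have 3 → 1 := by
    rintro ⟨r, hr, hrb⟩
    refine ⟨fun n => a (r n), ha.comp hr, fun n => ?_⟩
    have hpm : α - (a (Nat.nth (fun m => α - (a m : ℝ) < (2 : ℝ)⁻¹ ^ m) n) : ℝ) <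
        (2 : ℝ)⁻¹ ^ (Nat.nth (fun m => α - (a m : ℝ) < (2 : ℝ)⁻¹ ^ m) n) :=
      Nat.nth_mem_of_infinite hinf n
    have hnm : n ≤ Nat.nth (fun m => α - (a m : ℝ) < (2 : ℝ)⁻¹ ^ m) n :=
      Nat.le_nth fun hf => absurd hf hinf
    have h1 : (a (Nat.nth (fun m => α - (a m : ℝ) < (2 : ℝ)⁻¹ ^ m) n) : ℝ) ≤ (a (r n) : ℝ) := by
      exact_mod_cast hmono (hrb n)
    have h2 : (2 : ℝ)⁻¹ ^ (Nat.nth (fun m => α - (a m : ℝ) < (2 : ℝ)⁻¹ ^ m) n) ≤ (2 : ℝ)⁻¹ ^ n :=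
      pow_le_pow_of_le_one (by norm_num) (by norm_num) hnm
    rw [abs_of_nonneg (by linarith [hub (r n)])]
    linarith
  tfae_finish

end Main


/-- For the set `A` of catch-up points of a regaining approximation:
`α` computable ↔ `A` decidable ↔ `A` not hyperimmune. -/
theorem stmt_5 (α : ℝ) (a : ℕ → ℚ) (ha : Computable a) (hmono : Monotone a)
    (hlim : Tendsto (fun n => (a n : ℝ)) atTop (nhds α))
    (hio : ∃ᶠ n in atTop, α - (a n : ℝ) < (2 : ℝ)⁻¹ ^ n) :
    List.TFAE
      [ ComputableReal α,
        ComputablePred (fun n => α - (a n : ℝ) < (2 : ℝ)⁻¹ ^ n),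
        ∃ r : ℕ → ℕ, Computable r ∧
          ∀ n, Nat.nth (fun m => α - (a m : ℝ) < (2 : ℝ)⁻¹ ^ m) n ≤ r n ] :=
  main_thm α a ha hmono hlim hio
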